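/- Let G be a finite graph and X^G its associated 2-Segal set. Then the Hall algebra of X^G is commutative: for all subgraphs H, K of G, 1_H * 1_K = 1_K * 1_H. -/
import Mathlib



section GraphCore

variable {V : Type}

theorem telescope_iUnion {m : ℕ} (M : Fin (m + 1) → Set V) (hM : Antitone M) :
    (⋃ j : Fin m, (M j.castSucc \ M j.succ)) = M 0 \ M (Fin.last m) := by
  ext x
  simp only [Set.mem_iUnion, Set.mem_diff]
  constructor
  · rintro ⟨j, hj1, hj2⟩
    refine ⟨hM (Fin.zero_le _) hj1, fun hx => hj2 (hM (Fin.le_last _) hx)⟩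
  · rintro ⟨h0, hlast⟩
    by_contra hno
    push_neg at hno
    have hall : ∀ j : Fin (m + 1), x ∈ M j := by
      intro j
      induction j using Fin.induction with
      | zero => exact h0
      | succ j ih => exact (hno j ih)
    exact hlast (hall _)

theorem disjoint_layers {m : ℕ} (M : Fin (m + 1) → Set V) (hM : Antitone M) :
    ∀ i j : Fin m, i ≠ j →
      Disjoint (M i.castSucc \ M i.succ) (M j.castSucc \ M j.succ) := by
  have key : ∀ i j : Fin m, i < j →
      Disjoint (M i.castSucc \ M i.succ) (M j.castSucc \ M j.succ) := by
    intro i j hij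
    rw [Set.disjoint_left]
    rintro x ⟨_, hxi⟩ ⟨hxj, _⟩
    have : M j.castSucc ⊆ M i.succ := hM (by
      rw [Fin.succ_le_castSucc_iff]; exact hij)
    exact hxi (this hxj)
  intro i j hij
  rcases lt_or_gt_of_ne hij with h | h
  · exact key i j h
  · exact (key j i h).symm

/-- An `n`-simplex of the 2-Segal set `X^G` of a graph `G`: a subgraph `H`
together with an ordered partition of its vertices into `n` possibly empty
parts. -/
@[ext]
structure GSimplex {V : Type} (G : SimpleGraph V) (n : ℕ) where
  H : G.Subgraph
  S : Fin n → Set V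
  cover : (⋃ i, S i) = H.verts
  disj : ∀ i j : Fin n, i ≠ j → Disjoint (S i) (S j)

namespace GSimplex

variable {G : SimpleGraph V}

/-- The chain of "remaining" vertex sets of a partitioned subgraph:
`chain σ j` is the union of the parts with index `≥ j`. -/
def chain {n : ℕ} (σ : GSimplex G n) (j : Fin (n + 1)) : Set V :=
  ⋃ k : Fin n, if j ≤ k.castSucc then σ.S k else ∅

theorem chain_antitone {n : ℕ} (σ : GSimplex G n) : Antitone σ.chain := by
  intro j j' hjj'
  refine Set.iUnion_subset fun k => ?_
  by_cases h : j' ≤ k.castSucc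
  · simp only [h, if_pos]
    exact Set.subset_iUnion_of_subset k (by simp [hjj'.trans h])
  · simp [h]

theorem chain_zero {n : ℕ} (σ : GSimplex G n) : σ.chain 0 = σ.H.verts := by
  rw [← σ.cover]
  unfold chain

  ext k
  simp [Fin.zero_le]

theorem chain_last {n : ℕ} (σ : GSimplex G n) : σ.chain (Fin.last n) = ∅ := by
  unfold chain
  ext x
  simp only [Set.mem_iUnion, Set.mem_empty_iff_false, iff_false]
  rintro ⟨k, hk⟩
  rw [if_neg] at hk
  · exact hk
  · exact not_le.mpr (Fin.castSucc_lt_last k)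

/-- The action of a simplicial operator `α : [m] → [n]` on `X^G`:
the parts are merged or deleted according to `α`, and the subgraph is replaced
by its restriction (spanned subgraph) to the remaining vertices. -/
def act {m n : ℕ} (α : Fin (m + 1) → Fin (n + 1)) (hα : Monotone α)
    (σ : GSimplex G n) : GSimplex G m where
  H := σ.H.induce (σ.chain (α 0) \ σ.chain (α (Fin.last m)))
  S j := σ.chain (α j.castSucc) \ σ.chain (α j.succ)
  cover := by
    have := telescope_iUnion (fun j => σ.chain (α j)) (σ.chain_antitone.comp_monotone hα)
    simpa using this
  disj := disjoint_layers (fun j => σ.chain (α j)) (σ.chain_antitone.comp_monotone hα)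

/-- The `i`-th face map `X^G_{n+1} → X^G_n`. -/
def face {n : ℕ} (i : Fin (n + 2)) : GSimplex G (n + 1) → GSimplex G n :=
  act i.succAbove (Fin.strictMono_succAbove i).monotone

/-- The `i`-th degeneracy map `X^G_n → X^G_{n+1}`. -/
def degen {n : ℕ} (i : Fin (n + 1)) : GSimplex G n → GSimplex G (n + 1) :=
  act i.predAbove (Fin.predAbove_right_monotone i)

/-- The element of `X^G_1` corresponding to a subgraph `H` of `G`. -/
def ofSubgraph (H : G.Subgraph) : GSimplex G 1 where
  H := H
  S := fun _ => H.verts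
  cover := Set.iUnion_const _
  disj := fun i j hij => absurd (Subsingleton.elim i j) hij

end GSimplex

end GraphCore

section AuxComm

variable {V : Type} {G : SimpleGraph V}

open GSimplex

lemma chain_one2 (σ : GSimplex G 2) : σ.chain 1 = σ.S 1 := by
  unfold GSimplex.chain
  ext x
  simp only [Set.mem_iUnion]
  constructor
  · rintro ⟨k, hk⟩
    fin_cases k <;> simp_all
  · intro hx
    exact ⟨1, by simpa using hx⟩

lemma chain_two2 (σ : GSimplex G 2) : σ.chain 2 = ∅ := by
  have : (2 : Fin 3) = Fin.last 2 := by decide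
  rw [this, σ.chain_last]

lemma chain0_diff (σ : GSimplex G 2) : σ.chain 0 \ σ.chain 1 = σ.S 0 := by
  rw [σ.chain_zero, chain_one2, ← σ.cover]
  have hd := σ.disj 0 1 (by decide)
  ext x
  simp only [Set.mem_diff, Set.mem_iUnion]
  constructor
  · rintro ⟨⟨k, hk⟩, hn⟩
    fin_cases k
    · exact hk
    · exact absurd hk hn
  · intro hx
    exact ⟨⟨0, hx⟩, fun h1 => hd.le_bot ⟨hx, h1⟩⟩

/-- swap the two parts of a 2-simplex -/
def swap2 (σ : GSimplex G 2) : GSimplex G 2 where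
  H := σ.H
  S := fun i => σ.S (i + 1)
  cover := by
    rw [← σ.cover]
    exact (Equiv.addRight (1 : Fin 2)).surjective.iUnion_comp σ.S
  disj := fun i j hij => σ.disj _ _ (fun h => hij (by
    have := congrArg (· + 1) h
    simpa using this))

lemma swap2_swap2 (σ : GSimplex G 2) : swap2 (swap2 σ) = σ := by
  ext1
  · rfl
  · funext i
    have : i + 1 + 1 = i := by fin_cases i <;> decide
    simp only [swap2, this]

lemma swap2_S0 (σ : GSimplex G 2) : (swap2 σ).S 0 = σ.S 1 := rfl
lemma swap2_S1 (σ : GSimplex G 2) : (swap2 σ).S 1 = σ.S 0 :=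
  congrArg σ.S (by decide)

lemma face0_eq (σ : GSimplex G 2) :
    GSimplex.face 0 σ = ⟨σ.H.induce (σ.S 1), fun _ => σ.S 1,
      Set.iUnion_const _, fun i j hij => absurd (Subsingleton.elim i j) hij⟩ := by
  have h0 : (0 : Fin 3).succAbove 0 = 1 := by decide
  have h1 : (0 : Fin 3).succAbove (Fin.last 1) = 2 := by decide
  have hD : σ.chain 1 \ σ.chain 2 = σ.S 1 := by
    rw [chain_two2, chain_one2]; simp
  ext1
  · show σ.H.induce (σ.chain ((0:Fin 3).succAbove 0) \ σ.chain ((0:Fin 3).succAbove (Fin.last 1))) = _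
    rw [h0, h1, hD]
  · funext j
    show σ.chain ((0:Fin 3).succAbove j.castSucc) \ σ.chain ((0:Fin 3).succAbove j.succ) = σ.S 1
    have : j.castSucc = 0 := by fin_cases j; rfl
    have hj : j.succ = Fin.last 1 := by fin_cases j; rfl
    rw [this, hj, h0, h1, hD]

lemma face2_eq (σ : GSimplex G 2) :
    GSimplex.face 2 σ = ⟨σ.H.induce (σ.S 0), fun _ => σ.S 0,
      Set.iUnion_const _, fun i j hij => absurd (Subsingleton.elim i j) hij⟩ := by
  have h0 : (2 : Fin 3).succAbove 0 = 0 := by decide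
  have h1 : (2 : Fin 3).succAbove (Fin.last 1) = 1 := by decide
  ext1
  · show σ.H.induce (σ.chain ((2:Fin 3).succAbove 0) \ σ.chain ((2:Fin 3).succAbove (Fin.last 1))) = _
    rw [h0, h1, chain0_diff]
  · funext j
    show σ.chain ((2:Fin 3).succAbove j.castSucc) \ σ.chain ((2:Fin 3).succAbove j.succ) = σ.S 0
    have hc : j.castSucc = 0 := by fin_cases j; rfl
    have hj : j.succ = Fin.last 1 := by fin_cases j; rfl
    rw [hc, hj, h0, h1, chain0_diff]

lemma face1_eq (σ : GSimplex G 2) :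
    GSimplex.face 1 σ = ⟨σ.H.induce σ.H.verts, fun _ => σ.H.verts,
      Set.iUnion_const _, fun i j hij => absurd (Subsingleton.elim i j) hij⟩ := by
  have h0 : (1 : Fin 3).succAbove 0 = 0 := by decide
  have h1 : (1 : Fin 3).succAbove (Fin.last 1) = 2 := by decide
  have hD : σ.chain 0 \ σ.chain 2 = σ.H.verts := by
    rw [chain_two2, σ.chain_zero]; simp
  ext1
  · show σ.H.induce (σ.chain ((1:Fin 3).succAbove 0) \ σ.chain ((1:Fin 3).succAbove (Fin.last 1))) = _
    rw [h0, h1, hD]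
  · funext j
    show σ.chain ((1:Fin 3).succAbove j.castSucc) \ σ.chain ((1:Fin 3).succAbove j.succ) = σ.H.verts
    have hc : j.castSucc = 0 := by fin_cases j; rfl
    have hj : j.succ = Fin.last 1 := by fin_cases j; rfl
    rw [hc, hj, h0, h1, hD]

lemma face0_swap2 (σ : GSimplex G 2) : GSimplex.face 0 (swap2 σ) = GSimplex.face 2 σ := by
  rw [face0_eq, face2_eq, swap2_S1]
  rfl

lemma face2_swap2 (σ : GSimplex G 2) : GSimplex.face 2 (swap2 σ) = GSimplex.face 0 σ := by
  rw [face2_eq, face0_eq, swap2_S0]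
  rfl

lemma face1_swap2 (σ : GSimplex G 2) : GSimplex.face 1 (swap2 σ) = GSimplex.face 1 σ := by
  rw [face1_eq, face1_eq]
  rfl

end AuxComm

/-- For a finite graph `G`, the Hall algebra of the 2-Segal
set `X^G` is commutative: for all subgraphs `H, K` of `G` the structure
constants of `1_H * 1_K` and `1_K * 1_H` agree (the number of 2-simplices with
`d₀ = 1_H`, `d₂ = 1_K` and given `d₁` equals the number with `H` and `K`
exchanged). -/
theorem hall_graph_commutative {V : Type} [Fintype V] (G : SimpleGraph V) :
    ∀ (H K : G.Subgraph) (b'' : GSimplex G 1),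
      Nat.card {c : GSimplex G 2 //
          GSimplex.face 0 c = GSimplex.ofSubgraph H ∧
          GSimplex.face 2 c = GSimplex.ofSubgraph K ∧
          GSimplex.face 1 c = b''} =
      Nat.card {c : GSimplex G 2 //
          GSimplex.face 0 c = GSimplex.ofSubgraph K ∧
          GSimplex.face 2 c = GSimplex.ofSubgraph H ∧
          GSimplex.face 1 c = b''} := by
  intro H K b''
  apply Nat.card_congr
  exact {
    toFun := fun c => ⟨swap2 c.1,
      by rw [face0_swap2]; exact c.2.2.1,
      by rw [face2_swap2]; exact c.2.1,
      by rw [face1_swap2]; exact c.2.2.2⟩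
    invFun := fun c => ⟨swap2 c.1,
      by rw [face0_swap2]; exact c.2.2.1,
      by rw [face2_swap2]; exact c.2.1,
      by rw [face1_swap2]; exact c.2.2.2⟩
    left_inv := fun c => Subtype.ext (swap2_swap2 c.1)
    right_inv := fun c => Subtype.ext (swap2_swap2 c.1) }
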